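/- Let s, n be positive integers with s ≤ n. Then for every real number ξ, ∑_{p=1}^{s} (−1)^{s−p} · C(n−p, s−p) · C(n+s−1, n+s−p) · (1+ξ)^{p−1} = ∑_{l=0}^{s−1} C(n+s−1, l) · C(2(s−1)−l, s−1−l) · ξ^{l}. -/

import Mathlib

open Finset

lemma partial_alt (b : ℕ) (j : ℕ) :
    ∑ i ∈ range (j+1), (-1:ℝ)^i * ((b+1).choose i : ℝ) = (-1)^j * (b.choose j : ℝ) := by
  induction j with
  | zero => simp
  | succ j ih =>
    rw [Finset.sum_range_succ, ih, Nat.choose_succ_succ b j]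
    push_cast
    ring

lemma Hlem : ∀ a b j : ℕ,
    ∑ m ∈ range (j+1), (-1:ℝ)^m * ((a+m).choose m : ℝ) * ((a+1+b).choose (j-m) : ℝ)
      = (b.choose j : ℝ) := by
  intro a
  induction a with
  | zero =>
    intro b j
    have h1 : ∀ m ∈ range (j+1), (-1:ℝ)^m * ((0+m).choose m : ℝ) * ((0+1+b).choose (j-m):ℝ)
        = (-1:ℝ)^j * ((-1:ℝ)^(j-m) * ((b+1).choose (j-m) : ℝ)) := by
      intro m hm
      rw [Finset.mem_range, Nat.lt_succ_iff] at hm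
      rw [Nat.zero_add, Nat.choose_self]
      have hb : (0+1+b) = b+1 := by omega
      rw [hb]
      have hj : (-1:ℝ)^j = (-1)^(j-m) * (-1)^m := by
        rw [← pow_add, Nat.sub_add_cancel hm]
      have hsq : (-1:ℝ)^(j-m) * (-1)^(j-m) = 1 := by
        rw [← pow_add, ← two_mul, pow_mul]; norm_num
      rw [hj]
      linear_combination (-((-1:ℝ)^m * (((b+1).choose (j-m)):ℝ))) * hsq
    rw [Finset.sum_congr rfl h1, ← Finset.mul_sum]
    have hrefl : ∑ i ∈ range (j+1), (-1:ℝ)^(j-i) * ((b+1).choose (j-i):ℝ)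
        = ∑ i ∈ range (j+1), (-1:ℝ)^i * ((b+1).choose i:ℝ) := by
      rw [← Finset.sum_range_reflect (fun i => (-1:ℝ)^i * ((b+1).choose i:ℝ)) (j+1)]
      simp [Nat.add_sub_cancel]
    rw [hrefl, partial_alt, ← mul_assoc, ← pow_add, ← two_mul, pow_mul]
    norm_num
  | succ a iha =>
    intro b j
    induction j with
    | zero => simp
    | succ j ihj =>
      have peel := Finset.sum_range_succ'
        (fun m => (-1:ℝ)^m * ((a+1+m).choose m : ℝ) * ((a+1+1+b).choose (j+1-m) : ℝ)) (j+1)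
      rw [peel]
      simp only [pow_succ]
      have pascal : ∀ i ∈ range (j+1),
          (-1:ℝ)^i * (-1) * ((a+1+(i+1)).choose (i+1) : ℝ) * ((a+1+1+b).choose (j+1-(i+1)) : ℝ)
          = -((-1:ℝ)^i * ((a+1+i).choose i : ℝ) * ((a+1+1+b).choose (j-i) : ℝ))
            + -((-1:ℝ)^i * ((a+(i+1)).choose (i+1) : ℝ) * ((a+1+1+b).choose (j-i) : ℝ)) := by
        intro i hi
        have h2 : (a+1+(i+1)).choose (i+1) = (a+1+i).choose i + (a+1+i).choose (i+1) :=
          Nat.choose_succ_succ (a+1+i) i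
        have h4 : j+1-(i+1) = j - i := by omega
        have h5 : a+1+i = a+(i+1) := by ring
        rw [h4, h2, h5]
        push_cast
        ring
      rw [Finset.sum_congr rfl pascal, Finset.sum_add_distrib]
      have e1 : ∑ i ∈ range (j+1), (-1:ℝ)^i * ((a+1+i).choose i : ℝ) * ((a+1+1+b).choose (j-i) : ℝ)
          = (b.choose j : ℝ) := ihj
      have e2 := iha (b+1) (j+1)
      rw [Finset.sum_range_succ'
        (fun m => (-1:ℝ)^m * ((a+m).choose m : ℝ) * ((a+1+(b+1)).choose (j+1-m) : ℝ)) (j+1)] at e2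
      simp only [pow_succ] at e2
      have h6 : a+1+(b+1) = a+1+1+b := by ring
      rw [h6] at e2
      have h7 : ∀ i ∈ range (j+1),
          (-1:ℝ)^i * (-1) * ((a+(i+1)).choose (i+1) : ℝ) * ((a+1+1+b).choose (j+1-(i+1)) : ℝ)
          = -((-1:ℝ)^i * ((a+(i+1)).choose (i+1) : ℝ) * ((a+1+1+b).choose (j-i) : ℝ)) := by
        intro i hi
        have h4 : j+1-(i+1) = j - i := by omega
        rw [h4]; ring
      rw [Finset.sum_congr rfl h7] at e2
      simp only [Nat.sub_zero, Nat.add_zero, Nat.zero_add, Nat.choose_self, Nat.choose_zero_right,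
        pow_zero, Nat.cast_one, one_mul, mul_one, Finset.sum_neg_distrib] at e2 ⊢
      have pasR : ((b+1).choose (j+1) : ℝ) = (b.choose j : ℝ) + (b.choose (j+1) : ℝ) := by
        have : (b+1).choose (j+1) = b.choose j + b.choose (j+1) := Nat.choose_succ_succ b j
        rw [this]; push_cast; ring
      rw [e1]
      linarith [e2, pasR]

lemma coeff2 (k c l : ℕ) (hl : l ≤ k) :
    ∑ m ∈ range (k+1), (-1:ℝ)^m * ((c+m).choose m : ℝ) * ((2*k+c+1).choose (k-m) : ℝ) *
        ((k-m).choose l : ℝ)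
      = ((2*k+c+1).choose l : ℝ) * ((2*k-l).choose (k-l) : ℝ) := by
  rw [← Finset.sum_subset (Finset.range_subset_range.mpr (show k-l+1 ≤ k+1 by omega))
    (by
      intro m hm hnm
      rw [Finset.mem_range] at hm hnm
      have : k - m < l := by omega
      rw [Nat.choose_eq_zero_of_lt this]
      push_cast
      ring)]
  have hcong : ∀ m ∈ range (k-l+1),
      (-1:ℝ)^m * ((c+m).choose m : ℝ) * ((2*k+c+1).choose (k-m) : ℝ) * ((k-m).choose l : ℝ)
      = ((2*k+c+1).choose l : ℝ) *
          ((-1:ℝ)^m * ((c+m).choose m : ℝ) * ((c+1+(2*k-l)).choose ((k-l)-m) : ℝ)) := by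
    intro m hm
    rw [Finset.mem_range, Nat.lt_succ_iff] at hm
    have hmul := Nat.choose_mul (n := 2*k+c+1) (k := k-m) (s := l)
      (by omega)
    have e1 : 2*k+c+1-l = c+1+(2*k-l) := by omega
    have e2 : k-m-l = (k-l)-m := by omega
    rw [e1, e2] at hmul
    have : ((2*k+c+1).choose (k-m) : ℝ) * ((k-m).choose l : ℝ)
        = ((2*k+c+1).choose l : ℝ) * ((c+1+(2*k-l)).choose ((k-l)-m) : ℝ) := by
      exact_mod_cast congrArg (Nat.cast : ℕ → ℝ) hmul
    linear_combination ((-1:ℝ)^m * ((c+m).choose m : ℝ)) * this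
  rw [Finset.sum_congr rfl hcong, ← Finset.mul_sum, Hlem c (2*k-l) (k-l)]

lemma coeff_full (s n l : ℕ) (hs : 0 < s) (hsn : s ≤ n) (hl : l < s) :
    ∑ p ∈ Finset.Icc 1 s, (-1:ℝ)^(s-p) * ((n-p).choose (s-p) : ℝ) *
        ((n+s-1).choose (n+s-p) : ℝ) * ((p-1).choose l : ℝ)
      = ((n+s-1).choose l : ℝ) * ((2*(s-1)-l).choose (s-1-l) : ℝ) := by
  obtain ⟨k, rfl⟩ : ∃ k, s = k + 1 := ⟨s-1, by omega⟩
  obtain ⟨c, rfl⟩ : ∃ c, n = k + 1 + c := ⟨n-(k+1), by omega⟩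
  have hlk : l ≤ k := by omega
  set g : ℕ → ℝ := fun m => (-1:ℝ)^m * ((c+m).choose m : ℝ) * ((2*k+c+1).choose (k-m) : ℝ) *
    ((k-m).choose l : ℝ) with hg
  have step1 : ∑ p ∈ Finset.Icc 1 (k+1), (-1:ℝ)^(k+1-p) * ((k+1+c-p).choose (k+1-p) : ℝ) *
        ((k+1+c+(k+1)-1).choose (k+1+c+(k+1)-p) : ℝ) * ((p-1).choose l : ℝ)
      = ∑ i ∈ range (k+1), g (k - i) := by
    rw [← Finset.Ico_add_one_right_eq_Icc, Finset.sum_Ico_eq_sum_range]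
    have hr : k+1+1-1 = k+1 := by omega
    rw [hr]
    apply Finset.sum_congr rfl
    intro i hi
    rw [Finset.mem_range] at hi
    have e1 : k+1-(1+i) = k-i := by omega
    have e2 : k+1+c-(1+i) = c+(k-i) := by omega
    have e3 : k+1+c+(k+1)-1 = 2*k+c+1 := by omega
    have e4 : k+1+c+(k+1)-(1+i) = 2*k+c+1-i := by omega
    have e5 : 1+i-1 = i := by omega
    rw [e1, e2, e3, e4, e5, Nat.choose_symm (show i ≤ 2*k+c+1 by omega)]
    have e6 : k-(k-i) = i := by omega
    rw [hg]
    simp only [e6]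
  have step2 : ∑ i ∈ range (k+1), g (k - i) = ∑ m ∈ range (k+1), g m := by
    have h := Finset.sum_range_reflect g (k+1)
    simp only [Nat.add_sub_cancel] at h
    exact h
  have e7 : k+1+c+(k+1)-1 = 2*k+c+1 := by omega
  have e8 : 2*(k+1-1)-l = 2*k-l := by omega
  have e9 : k+1-1-l = k-l := by omega
  rw [step1, step2, e7, e8, e9, hg, coeff2 k c l hlk]


/-- Non-alternating closed form of the quantity `U₁`:
`∑_{p=1}^{s} (−1)^{s−p} C(n−p,s−p) C(n+s−1,n+s−p) (1+ξ)^{p−1}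
  = ∑_{l=0}^{s−1} C(n+s−1,l) C(2(s−1)−l,s−1−l) ξ^l`. -/
theorem U1_nonalternating (s n : ℕ) (hs : 0 < s) (hsn : s ≤ n) (ξ : ℝ) :
    ∑ p ∈ Finset.Icc 1 s,
      (-1 : ℝ) ^ (s - p) * (Nat.choose (n - p) (s - p) : ℝ) *
        (Nat.choose (n + s - 1) (n + s - p) : ℝ) * (1 + ξ) ^ (p - 1)
      = ∑ l ∈ Finset.range s,
          (Nat.choose (n + s - 1) l : ℝ) *
            (Nat.choose (2 * (s - 1) - l) (s - 1 - l) : ℝ) * ξ ^ l := by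
  have expand : ∀ p ∈ Finset.Icc 1 s,
      ((1:ℝ)+ξ)^(p-1) = ∑ l ∈ Finset.range s, ((p-1).choose l : ℝ) * ξ^l := by
    intro p hp
    rw [Finset.mem_Icc] at hp
    rw [show (1:ℝ)+ξ = ξ+1 from by ring, add_pow]
    rw [Finset.sum_subset (Finset.range_subset_range.mpr (show p-1+1 ≤ s by omega))
      (by
        intro x hx hnx
        rw [Finset.mem_range] at hx hnx
        rw [Nat.choose_eq_zero_of_lt (by omega : p-1 < x)]
        push_cast
        ring)]
    apply Finset.sum_congr rfl
    intro x _
    rw [one_pow]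
    ring
  calc
    ∑ p ∈ Finset.Icc 1 s,
      (-1 : ℝ) ^ (s - p) * ((n - p).choose (s - p) : ℝ) *
        ((n + s - 1).choose (n + s - p) : ℝ) * (1 + ξ) ^ (p - 1)
      = ∑ p ∈ Finset.Icc 1 s, ∑ l ∈ Finset.range s,
          ((-1 : ℝ) ^ (s - p) * ((n - p).choose (s - p) : ℝ) *
            ((n + s - 1).choose (n + s - p) : ℝ) * ((p-1).choose l : ℝ)) * ξ^l := by
        apply Finset.sum_congr rfl
        intro p hp
        rw [expand p hp, Finset.mul_sum]
        apply Finset.sum_congr rfl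
        intro x _
        ring
    _ = ∑ l ∈ Finset.range s, (∑ p ∈ Finset.Icc 1 s,
          (-1 : ℝ) ^ (s - p) * ((n - p).choose (s - p) : ℝ) *
            ((n + s - 1).choose (n + s - p) : ℝ) * ((p-1).choose l : ℝ)) * ξ^l := by
        rw [Finset.sum_comm]
        apply Finset.sum_congr rfl
        intro l _
        rw [Finset.sum_mul]
    _ = _ := by
        apply Finset.sum_congr rfl
        intro l hl
        rw [Finset.mem_range] at hl
        rw [coeff_full s n l hs hsn hl]
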